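/- Let F, G : [a,b] × [c,d] → ℝ with ‖F‖_{1;p} < ∞ and suppose |Δ_iΔ_j G(x_i,y_j)| ≤ λ(x_i − x_{i-1}) μ(y_j − y_{j-1}) for monotone increasing λ, μ. Let {t_i^{(k)}} be a nested dyadic-refining sequence of partitions of [a,b] with |t_i^{(k)} − t_{i-1}^{(k)}| < 4·2^{-k}, and set S_{M,0} = Σ_{i=1}^{2^M} F(t_i^{(M)}, d) (G(t_i^{(M)}, d) − G(t_{i-1}^{(M)}, d) − G(t_i^{(M)}, c) + G(t_{i-1}^{(M)}, c)) and S_{0,0} = F(b,d)(G(b,d) − G(a,d) − G(b,c) + G(a,c)). Then there is an absolute constant K_1 such that |S_{M,0} − S_{0,0}| ≤ K_1 μ(d − c) Σ_{m=1}^∞ (‖F‖_{1;p}/m^{1/p}) λ(4/m). -/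

import Mathlib

open Set

noncomputable section

/-- Rectangular increment of a two-variable function. -/
def rect (H : ℝ → ℝ → ℝ) (x x' y y' : ℝ) : ℝ :=
  H x' y' - H x y' - H x' y + H x y

/-- `t` is a (monotone) partition of `[a,b]`. -/
def IsPartition {n : ℕ} (a b : ℝ) (t : Fin (n + 1) → ℝ) : Prop :=
  Monotone t ∧ t 0 = a ∧ t (Fin.last n) = b

/-- The set of `p`-variation sums of `f` over partitions of `[a,b]`. -/
def pVarSet (p a b : ℝ) (f : ℝ → ℝ) : Set ℝ :=
  {v | ∃ (n : ℕ) (t : Fin (n + 1) → ℝ), IsPartition a b t ∧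
        v = ∑ i : Fin n, |f (t i.succ) - f (t i.castSucc)| ^ p}

/-- The `p`-variation seminorm `‖f‖_{[a,b],p}`. -/
def pVarNorm (p a b : ℝ) (f : ℝ → ℝ) : ℝ :=
  sSup (pVarSet p a b f) ^ (1 / p)

def biVar1Set (p a b c d : ℝ) (F : ℝ → ℝ → ℝ) : Set ℝ :=
  {v | ∃ y₁ ∈ Icc c d, ∃ y₂ ∈ Icc c d, v = pVarNorm p a b (fun x => F x y₁ - F x y₂)}

/-- The first bivariation seminorm `‖F‖_{1;p}`. -/
def biVar1 (p a b c d : ℝ) (F : ℝ → ℝ → ℝ) : ℝ := sSup (biVar1Set p a b c d F)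

def biVar2Set (q a b c d : ℝ) (F : ℝ → ℝ → ℝ) : Set ℝ :=
  {v | ∃ x₁ ∈ Icc a b, ∃ x₂ ∈ Icc a b, v = pVarNorm q c d (fun y => F x₁ y - F x₂ y)}

/-- The second bivariation seminorm `‖F‖_{2;q}`. -/
def biVar2 (q a b c d : ℝ) (F : ℝ → ℝ → ℝ) : ℝ := sSup (biVar2Set q a b c d F)

/-- `‖F‖_{1;p} < ∞`: all the suprema involved are finite. -/
def FiniteBiVar1 (p a b c d : ℝ) (F : ℝ → ℝ → ℝ) : Prop :=
  (∀ y₁ ∈ Icc c d, ∀ y₂ ∈ Icc c d,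
      BddAbove (pVarSet p a b (fun x => F x y₁ - F x y₂))) ∧
  BddAbove (biVar1Set p a b c d F)

/-- `‖F‖_{2;q} < ∞`: all the suprema involved are finite. -/
def FiniteBiVar2 (q a b c d : ℝ) (F : ℝ → ℝ → ℝ) : Prop :=
  (∀ x₁ ∈ Icc a b, ∀ x₂ ∈ Icc a b,
      BddAbove (pVarSet q c d (fun y => F x₁ y - F x₂ y))) ∧
  BddAbove (biVar2Set q a b c d F)

/-- Pairing a sum over `range (2*n)`. -/
lemma sum_pair (n : ℕ) (g : ℕ → ℝ) :
    ∑ j ∈ Finset.range (2 * n), g j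
      = ∑ i ∈ Finset.range n, (g (2 * i) + g (2 * i + 1)) := by
  induction n with
  | zero => simp
  | succ n ih =>
    have h2 : 2 * (n + 1) = (2 * n) + 1 + 1 := by ring
    rw [h2, Finset.sum_range_succ, Finset.sum_range_succ, ih, Finset.sum_range_succ]
    ring

/-- A trivial two-point partition gives a member of `pVarSet`. -/
lemma trivial_mem_pVarSet (p a b : ℝ) (f : ℝ → ℝ) (hab : a ≤ b) :
    |f b - f a| ^ p ∈ pVarSet p a b f := by
  refine ⟨1, fun j => if (j : ℕ) = 0 then a else b, ⟨?_, ?_, ?_⟩, ?_⟩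
  · intro j1 j2 h
    dsimp only
    have hle : (j1 : ℕ) ≤ (j2 : ℕ) := Fin.le_def.mp h
    split_ifs with h1 h2 h2
    · exact le_rfl
    · exact hab
    · omega
    · exact le_rfl
  · rfl
  · rfl
  · simp [Fin.sum_univ_one]

/-- marginal estimate.  For an absolute constant `K₁`, under the
hypotheses of Young's theorem (in particular `F(·,c) = 0`), the difference
`S_{M,0} - S_{0,0}` of marginal Riemann–Stieltjes sums along a nested
dyadically-refining partition sequence of `[a,b]` is bounded by
`K₁ μ(d-c) Σ_m (‖F‖_{1;p}/m^{1/p}) λ(4/m)`. -/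
theorem young_marginal_estimate :
    ∃ K₁ : ℝ, ∀ (a b c d p : ℝ), a < b → c < d → 1 ≤ p →
    ∀ (F G : ℝ → ℝ → ℝ) (lam mu : ℝ → ℝ),
    MonotoneOn lam (Set.Ici 0) → MonotoneOn mu (Set.Ici 0) →
    (∀ u ≥ (0 : ℝ), 0 ≤ lam u) → (∀ u ≥ (0 : ℝ), 0 ≤ mu u) →
    FiniteBiVar1 p a b c d F →
    (∀ x ∈ Icc a b, F x c = 0) →
    (∀ x₁ x₂ y₁ y₂ : ℝ, a ≤ x₁ → x₁ ≤ x₂ → x₂ ≤ b → c ≤ y₁ → y₁ ≤ y₂ → y₂ ≤ d →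
      |rect G x₁ x₂ y₁ y₂| ≤ lam (x₂ - x₁) * mu (y₂ - y₁)) →
    ∀ (M : ℕ) (t : ℕ → ℕ → ℝ),
    (∀ k ≤ M, (∀ i j : ℕ, i ≤ j → j ≤ 2 ^ k → t k i ≤ t k j) ∧
      t k 0 = a ∧ t k (2 ^ k) = b) →
    (∀ k ≤ M, ∀ i < 2 ^ k, t k (i + 1) - t k i < 4 / 2 ^ k) →
    (∀ k, 1 ≤ k → k ≤ M → ∀ i ≤ 2 ^ (k - 1), t k (2 * i) = t (k - 1) i) →
    Summable (fun m : ℕ =>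
      biVar1 p a b c d F / ((m : ℝ) + 1) ^ (1 / p) * lam (4 / ((m : ℝ) + 1))) →
    |(∑ i ∈ Finset.range (2 ^ M),
        F (t M (i + 1)) d * rect G (t M i) (t M (i + 1)) c d)
      - F b d * rect G a b c d| ≤
      K₁ * mu (d - c) *
        ∑' m : ℕ,
          biVar1 p a b c d F / ((m : ℝ) + 1) ^ (1 / p) * lam (4 / ((m : ℝ) + 1)) := by
  refine ⟨2, ?_⟩
  intro a b c d p hab hcd hp1 F G lam mu hlam hmu hlam0 hmu0 hfin hFc hG M t hpart hmesh hnest hsum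
  have hp0 : (0:ℝ) < p := lt_of_lt_of_le one_pos hp1
  set V : ℝ := biVar1 p a b c d F with hVdef
  set f : ℝ → ℝ := fun x => F x d - F x c with hfdef
  set S : ℕ → ℝ := fun k => ∑ i ∈ Finset.range (2 ^ k),
      F (t k (i + 1)) d * rect G (t k i) (t k (i + 1)) c d with hSdef
  set A : ℕ → ℝ := fun m => V / ((m : ℝ) + 1) ^ (1 / p) * lam (4 / ((m : ℝ) + 1)) with hAdef
  -- basic facts
  have hmono : ∀ k ≤ M, ∀ i j : ℕ, i ≤ j → j ≤ 2 ^ k → t k i ≤ t k j := fun k hk => (hpart k hk).1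
  have ht0 : ∀ k ≤ M, t k 0 = a := fun k hk => (hpart k hk).2.1
  have htb : ∀ k ≤ M, t k (2 ^ k) = b := fun k hk => (hpart k hk).2.2
  have hmem : ∀ k ≤ M, ∀ j ≤ 2 ^ k, t k j ∈ Icc a b := by
    intro k hk j hj
    constructor
    · rw [← ht0 k hk]; exact hmono k hk 0 j (Nat.zero_le _) hj
    · rw [← htb k hk]; exact hmono k hk j (2 ^ k) hj le_rfl
  have hmud : 0 ≤ mu (d - c) := hmu0 _ (by linarith)
  -- nonnegativity of V
  have hfdc : BddAbove (pVarSet p a b f) := hfin.1 d ⟨hcd.le, le_rfl⟩ c ⟨le_rfl, hcd.le⟩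
  have hsSup0 : 0 ≤ sSup (pVarSet p a b f) :=
    le_trans (by positivity) (le_csSup hfdc (trivial_mem_pVarSet p a b f hab.le))
  have hpseminonneg : 0 ≤ pVarNorm p a b f := Real.rpow_nonneg hsSup0 _
  have hpvle : pVarNorm p a b f ≤ V :=
    le_csSup hfin.2 ⟨d, ⟨hcd.le, le_rfl⟩, c, ⟨le_rfl, hcd.le⟩, rfl⟩
  have hV0 : 0 ≤ V := le_trans hpseminonneg hpvle
  have hA0 : ∀ m : ℕ, 0 ≤ A m := by
    intro m
    have h1 : (0:ℝ) < ((m : ℝ) + 1) ^ (1 / p) :=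
      Real.rpow_pos_of_pos (by positivity) _
    have h2 : 0 ≤ lam (4 / ((m : ℝ) + 1)) := hlam0 _ (by positivity)
    exact mul_nonneg (div_nonneg hV0 h1.le) h2
  -- the level-k bound
  have hlevel : ∀ k, k + 1 ≤ M →
      |S (k + 1) - S k| ≤ ((2:ℝ) ^ k) ^ (1 - p⁻¹) * V *
        (lam (4 / 2 ^ (k + 1)) * mu (d - c)) := by
    intro k hkM
    have h2p : (2:ℕ) ^ (k + 1) = 2 * 2 ^ k := by rw [pow_succ]; ring
    set ΔF : ℕ → ℝ := fun i => F (t (k + 1) (2 * i + 1)) d - F (t (k + 1) (2 * i + 2)) d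
      with hDF
    have hnest' : ∀ i ≤ 2 ^ k, t k i = t (k + 1) (2 * i) := by
      intro i hi
      exact (hnest (k + 1) (Nat.le_add_left 1 k) hkM i hi).symm
    -- the difference of consecutive sums
    have hdiff : S (k + 1) - S k = ∑ i ∈ Finset.range (2 ^ k),
        ΔF i * rect G (t (k + 1) (2 * i)) (t (k + 1) (2 * i + 1)) c d := by
      have e1 : S (k + 1) = ∑ i ∈ Finset.range (2 ^ k),
          (F (t (k + 1) (2 * i + 1)) d * rect G (t (k + 1) (2 * i)) (t (k + 1) (2 * i + 1)) c d
           + F (t (k + 1) (2 * i + 2)) d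
              * rect G (t (k + 1) (2 * i + 1)) (t (k + 1) (2 * i + 2)) c d) := by
        show (∑ j ∈ Finset.range (2 ^ (k + 1)),
            F (t (k + 1) (j + 1)) d * rect G (t (k + 1) j) (t (k + 1) (j + 1)) c d) = _
        rw [h2p, sum_pair]
      have e2 : S k = ∑ i ∈ Finset.range (2 ^ k),
          F (t (k + 1) (2 * i + 2)) d
            * rect G (t (k + 1) (2 * i)) (t (k + 1) (2 * i + 2)) c d := by
        refine Finset.sum_congr rfl fun i hi => ?_
        have hi' := Finset.mem_range.mp hi
        have h1 : 2 * (i + 1) = 2 * i + 2 := by ring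
        rw [hnest' i hi'.le, hnest' (i + 1) hi', h1]
      rw [e1, e2, ← Finset.sum_sub_distrib]
      refine Finset.sum_congr rfl fun i hi => ?_
      simp only [hDF, rect]
      ring
    -- termwise bound via the control on rect G
    have hbound : ∀ i ∈ Finset.range (2 ^ k),
        |ΔF i * rect G (t (k + 1) (2 * i)) (t (k + 1) (2 * i + 1)) c d|
          ≤ |ΔF i| * (lam (4 / 2 ^ (k + 1)) * mu (d - c)) := by
      intro i hi
      have hi' := Finset.mem_range.mp hi
      have h2i1 : 2 * i + 1 ≤ 2 ^ (k + 1) := by omega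
      have hx1 : t (k + 1) (2 * i) ∈ Icc a b := hmem (k + 1) hkM (2 * i) (by omega)
      have hx2 : t (k + 1) (2 * i + 1) ∈ Icc a b := hmem (k + 1) hkM _ h2i1
      have hxle : t (k + 1) (2 * i) ≤ t (k + 1) (2 * i + 1) :=
        hmono (k + 1) hkM _ _ (by omega) h2i1
      have hrect : |rect G (t (k + 1) (2 * i)) (t (k + 1) (2 * i + 1)) c d|
          ≤ lam (t (k + 1) (2 * i + 1) - t (k + 1) (2 * i)) * mu (d - c) :=
        hG _ _ _ _ hx1.1 hxle hx2.2 le_rfl hcd.le le_rfl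
      have hlamle : lam (t (k + 1) (2 * i + 1) - t (k + 1) (2 * i)) ≤ lam (4 / 2 ^ (k + 1)) :=
        hlam (mem_Ici.mpr (by linarith)) (mem_Ici.mpr (by positivity))
          (le_of_lt (hmesh (k + 1) hkM (2 * i) (by omega)))
      rw [abs_mul]
      refine mul_le_mul_of_nonneg_left ?_ (abs_nonneg _)
      exact le_trans hrect (mul_le_mul_of_nonneg_right hlamle hmud)
    -- Hölder
    have hhold : ∑ i ∈ Finset.range (2 ^ k), |ΔF i|
        ≤ ((2:ℝ) ^ k) ^ (1 - p⁻¹) * (∑ i ∈ Finset.range (2 ^ k), |ΔF i| ^ p) ^ p⁻¹ := by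
      have h := Real.inner_le_weight_mul_Lp_of_nonneg (Finset.range (2 ^ k)) hp1
        (fun _ => (1:ℝ)) (fun i => |ΔF i|) (fun _ => zero_le_one) (fun i => abs_nonneg _)
      simp only [one_mul, Finset.sum_const, Finset.card_range, nsmul_eq_mul, mul_one] at h
      push_cast at h
      exact h
    -- p-variation bound
    have hvar : (∑ i ∈ Finset.range (2 ^ k), |ΔF i| ^ p) ≤ sSup (pVarSet p a b f) := by
      have hTmem : (∑ j ∈ Finset.range (2 ^ (k + 1)),
          |f (t (k + 1) (j + 1)) - f (t (k + 1) j)| ^ p) ∈ pVarSet p a b f := by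
        refine ⟨2 ^ (k + 1), fun j => t (k + 1) (j : ℕ), ⟨?_, ?_, ?_⟩, ?_⟩
        · intro j1 j2 h
          exact hmono (k + 1) hkM _ _ (Fin.le_def.mp h) (Nat.lt_succ_iff.mp j2.isLt)
        · simpa using ht0 (k + 1) hkM
        · simpa using htb (k + 1) hkM
        · rw [← Fin.sum_univ_eq_sum_range (fun j =>
            |f (t (k + 1) (j + 1)) - f (t (k + 1) j)| ^ p) (2 ^ (k + 1))]
          refine Finset.sum_congr rfl fun j _ => ?_
          simp [Fin.val_succ, Fin.coe_castSucc]
      refine le_trans ?_ (le_csSup hfdc hTmem)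
      rw [h2p, sum_pair]
      refine Finset.sum_le_sum fun i hi => ?_
      have hi' := Finset.mem_range.mp hi
      have hterm : |ΔF i| ^ p
          = |f (t (k + 1) (2 * i + 1 + 1)) - f (t (k + 1) (2 * i + 1))| ^ p := by
        have hz1 : F (t (k + 1) (2 * i + 1)) c = 0 :=
          hFc _ (hmem (k + 1) hkM _ (by omega))
        have hz2 : F (t (k + 1) (2 * i + 2)) c = 0 :=
          hFc _ (hmem (k + 1) hkM _ (by omega))
        have : 2 * i + 1 + 1 = 2 * i + 2 := by ring
        rw [this]
        simp only [hDF, hfdef, hz1, hz2, sub_zero]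
        rw [abs_sub_comm]
      rw [hterm]
      exact le_add_of_nonneg_left (Real.rpow_nonneg (abs_nonneg _) _)
    have hvar2 : (∑ i ∈ Finset.range (2 ^ k), |ΔF i| ^ p) ^ p⁻¹ ≤ V := by
      have hnn : (0:ℝ) ≤ ∑ i ∈ Finset.range (2 ^ k), |ΔF i| ^ p :=
        Finset.sum_nonneg fun i _ => Real.rpow_nonneg (abs_nonneg _) _
      have h := Real.rpow_le_rpow hnn hvar (inv_nonneg.mpr hp0.le)
      refine le_trans h (le_trans (le_of_eq ?_) hpvle)
      rw [pVarNorm, one_div]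
    have hsum1 : ∑ i ∈ Finset.range (2 ^ k), |ΔF i| ≤ ((2:ℝ) ^ k) ^ (1 - p⁻¹) * V :=
      le_trans hhold (mul_le_mul_of_nonneg_left hvar2 (Real.rpow_nonneg (by positivity) _))
    have hC0 : 0 ≤ lam (4 / 2 ^ (k + 1)) * mu (d - c) :=
      mul_nonneg (hlam0 _ (by positivity)) hmud
    calc |S (k + 1) - S k|
        = |∑ i ∈ Finset.range (2 ^ k),
            ΔF i * rect G (t (k + 1) (2 * i)) (t (k + 1) (2 * i + 1)) c d| := by rw [hdiff]
      _ ≤ ∑ i ∈ Finset.range (2 ^ k),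
            |ΔF i * rect G (t (k + 1) (2 * i)) (t (k + 1) (2 * i + 1)) c d| :=
          Finset.abs_sum_le_sum_abs _ _
      _ ≤ ∑ i ∈ Finset.range (2 ^ k), |ΔF i| * (lam (4 / 2 ^ (k + 1)) * mu (d - c)) :=
          Finset.sum_le_sum hbound
      _ = (∑ i ∈ Finset.range (2 ^ k), |ΔF i|) * (lam (4 / 2 ^ (k + 1)) * mu (d - c)) := by
          rw [Finset.sum_mul]
      _ ≤ ((2:ℝ) ^ k) ^ (1 - p⁻¹) * V * (lam (4 / 2 ^ (k + 1)) * mu (d - c)) :=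
          mul_le_mul_of_nonneg_right hsum1 hC0
  -- level bound vs block of the series
  have hblock : ∀ k : ℕ,
      ((2:ℝ) ^ k) ^ (1 - p⁻¹) * V * (lam (4 / 2 ^ (k + 1)) * mu (d - c)) ≤
        2 * mu (d - c) * ∑ m ∈ Finset.Ico (2 ^ k - 1) (2 ^ (k + 1) - 1), A m := by
    intro k
    have hL0 : 0 ≤ lam (4 / 2 ^ (k + 1)) := hlam0 _ (by positivity)
    have hX : (0:ℝ) < ((2:ℝ) ^ (k + 1)) ^ (1 / p) :=
      Real.rpow_pos_of_pos (by positivity) _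
    -- per-element lower bound on A m over the block
    have hq : ∀ m ∈ Finset.Ico (2 ^ k - 1) (2 ^ (k + 1) - 1),
        V / ((2:ℝ) ^ (k + 1)) ^ (1 / p) * lam (4 / 2 ^ (k + 1)) ≤ A m := by
      intro m hm
      obtain ⟨hm1, hm2⟩ := Finset.mem_Ico.mp hm
      have hn : 1 ≤ 2 ^ (k + 1) := Nat.one_le_two_pow
      have hmn : m + 1 ≤ 2 ^ (k + 1) := by omega
      have hmr : (m:ℝ) + 1 ≤ (2:ℝ) ^ (k + 1) := by exact_mod_cast hmn
      have hmp : (0:ℝ) < (m:ℝ) + 1 := by positivity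
      have h1 : ((m:ℝ) + 1) ^ (1 / p) ≤ ((2:ℝ) ^ (k + 1)) ^ (1 / p) :=
        Real.rpow_le_rpow hmp.le hmr (by positivity)
      have h2 : V / ((2:ℝ) ^ (k + 1)) ^ (1 / p) ≤ V / ((m:ℝ) + 1) ^ (1 / p) := by
        gcongr
      have h3 : lam (4 / 2 ^ (k + 1)) ≤ lam (4 / ((m:ℝ) + 1)) := by
        refine hlam (mem_Ici.mpr (by positivity)) (mem_Ici.mpr (by positivity)) ?_
        gcongr
      refine mul_le_mul h2 h3 hL0 ?_
      exact div_nonneg hV0 (Real.rpow_pos_of_pos hmp _).le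
    have hcard : (Finset.Ico (2 ^ k - 1) (2 ^ (k + 1) - 1)).card = 2 ^ k := by
      rw [Nat.card_Ico]
      have h2 : 2 ^ (k + 1) = 2 ^ k + 2 ^ k := by rw [pow_succ]; ring
      have h1 : 1 ≤ 2 ^ k := Nat.one_le_two_pow
      omega
    have hsumge : ((2:ℝ) ^ k) * (V / ((2:ℝ) ^ (k + 1)) ^ (1 / p) * lam (4 / 2 ^ (k + 1)))
        ≤ ∑ m ∈ Finset.Ico (2 ^ k - 1) (2 ^ (k + 1) - 1), A m := by
      have := Finset.card_nsmul_le_sum _ _ _ hq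
      rw [hcard, nsmul_eq_mul] at this
      push_cast at this
      exact this
    -- the scalar exponent inequality
    have hkey : ((2:ℝ) ^ k) ^ (1 - p⁻¹) ≤ 2 * (2:ℝ) ^ k / ((2:ℝ) ^ (k + 1)) ^ (1 / p) := by
      rw [le_div_iff₀ hX]
      have e1 : ((2:ℝ) ^ k) ^ (1 - p⁻¹) = (2:ℝ) ^ ((k:ℝ) * (1 - p⁻¹)) := by
        rw [← Real.rpow_natCast 2 k, ← Real.rpow_mul (by norm_num)]
      have e2 : ((2:ℝ) ^ (k + 1)) ^ (1 / p) = (2:ℝ) ^ (((k:ℝ) + 1) * (1 / p)) := by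
        rw [← Real.rpow_natCast 2 (k + 1), ← Real.rpow_mul (by norm_num)]
        push_cast
        ring_nf
      have e3 : 2 * (2:ℝ) ^ k = (2:ℝ) ^ ((k:ℝ) + 1) := by
        rw [Real.rpow_add (by norm_num : (0:ℝ) < 2), Real.rpow_one, Real.rpow_natCast]
        ring
      rw [e1, e2, e3, ← Real.rpow_add (by norm_num)]
      refine Real.rpow_le_rpow_of_exponent_le one_le_two ?_
      have hinv : 1 / p ≤ 1 := by rw [div_le_one hp0]; exact hp1
      have : (k:ℝ) * (1 - p⁻¹) + ((k:ℝ) + 1) * (1 / p) = (k:ℝ) + 1 / p := by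
        field_simp
        ring
      rw [this]
      linarith
    calc ((2:ℝ) ^ k) ^ (1 - p⁻¹) * V * (lam (4 / 2 ^ (k + 1)) * mu (d - c))
        = ((2:ℝ) ^ k) ^ (1 - p⁻¹) * (V * lam (4 / 2 ^ (k + 1)) * mu (d - c)) := by ring
      _ ≤ (2 * (2:ℝ) ^ k / ((2:ℝ) ^ (k + 1)) ^ (1 / p)) *
            (V * lam (4 / 2 ^ (k + 1)) * mu (d - c)) := by
          refine mul_le_mul_of_nonneg_right hkey ?_
          exact mul_nonneg (mul_nonneg hV0 hL0) hmud
      _ = 2 * mu (d - c) *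
            (((2:ℝ) ^ k) * (V / ((2:ℝ) ^ (k + 1)) ^ (1 / p) * lam (4 / 2 ^ (k + 1)))) := by
          ring
      _ ≤ 2 * mu (d - c) * ∑ m ∈ Finset.Ico (2 ^ k - 1) (2 ^ (k + 1) - 1), A m := by
          refine mul_le_mul_of_nonneg_left hsumge (by linarith)
  -- blocks glue into an initial segment
  have hglue : ∀ N : ℕ,
      ∑ k ∈ Finset.range N, (∑ m ∈ Finset.Ico (2 ^ k - 1) (2 ^ (k + 1) - 1), A m)
        = ∑ m ∈ Finset.range (2 ^ N - 1), A m := by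
    intro N
    induction N with
    | zero => simp
    | succ N ih =>
      rw [Finset.sum_range_succ, ih, Finset.range_eq_Ico, Finset.range_eq_Ico]
      exact Finset.sum_Ico_consecutive A (Nat.zero_le _)
        (Nat.sub_le_sub_right (Nat.pow_le_pow_right (by norm_num : 0 < 2) (Nat.le_succ N)) 1)
  -- goal reduction
  have hS0 : S 0 = F b d * rect G a b c d := by
    have h1 : t 0 0 = a := ht0 0 (Nat.zero_le M)
    have h2 : t 0 1 = b := htb 0 (Nat.zero_le M)
    simp [hSdef, Finset.sum_range_one, h1, h2]
  have htel : S M - S 0 = ∑ k ∈ Finset.range M, (S (k + 1) - S k) := by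
    rw [Finset.sum_range_sub]
  have hgoal : (∑ i ∈ Finset.range (2 ^ M),
      F (t M (i + 1)) d * rect G (t M i) (t M (i + 1)) c d) = S M := rfl
  rw [hgoal, ← hS0]
  calc |S M - S 0| = |∑ k ∈ Finset.range M, (S (k + 1) - S k)| := by rw [htel]
    _ ≤ ∑ k ∈ Finset.range M, |S (k + 1) - S k| := Finset.abs_sum_le_sum_abs _ _
    _ ≤ ∑ k ∈ Finset.range M,
        2 * mu (d - c) * ∑ m ∈ Finset.Ico (2 ^ k - 1) (2 ^ (k + 1) - 1), A m := by
        refine Finset.sum_le_sum fun k hk => ?_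
        exact le_trans (hlevel k (Finset.mem_range.mp hk)) (hblock k)
    _ = 2 * mu (d - c) * ∑ m ∈ Finset.range (2 ^ M - 1), A m := by
        rw [← Finset.mul_sum, hglue M]
    _ ≤ 2 * mu (d - c) * ∑' m, A m := by
        refine mul_le_mul_of_nonneg_left ?_ (by positivity)
        exact Summable.sum_le_tsum _ (fun m _ => hA0 m) hsum
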